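/- Let A ∈ ℂ^{n×n} have singular value decomposition A = F Σ Gᴴ with F, G unitary and Σ real nonnegative diagonal. Then FGᴴ is a closest unitary matrix to A in Frobenius norm: for every unitary W ∈ ℂ^{n×n}, ‖A − FGᴴ‖_F ≤ ‖A − W‖_F. -/

import Mathlib

open Matrix

/-- The Frobenius norm of a complex square matrix. -/
noncomputable def frobNorm {n : ℕ} (M : Matrix (Fin n) (Fin n) ℂ) : ℝ :=
  Real.sqrt (∑ k, ∑ l, ‖M k l‖ ^ 2)

namespace ClosestUnitaryAux

noncomputable def S {n : ℕ} (M : Matrix (Fin n) (Fin n) ℂ) : ℝ :=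
  ∑ k, ∑ l, Complex.normSq (M k l)

lemma frobNorm_eq {n : ℕ} (M : Matrix (Fin n) (Fin n) ℂ) :
    frobNorm M = Real.sqrt (S M) := by
  unfold frobNorm S
  congr 1
  simp [Complex.sq_norm]

lemma S_eq_trace {n : ℕ} (M : Matrix (Fin n) (Fin n) ℂ) :
    ((S M : ℝ) : ℂ) = Matrix.trace (Mᴴ * M) := by
  unfold S Matrix.trace
  push_cast
  rw [Finset.sum_comm]
  refine Finset.sum_congr rfl fun l _ => ?_
  simp [Matrix.mul_apply, Matrix.conjTranspose_apply, Matrix.diag,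
    Complex.normSq_eq_conj_mul_self]

lemma S_conj {n : ℕ} (P Q M : Matrix (Fin n) (Fin n) ℂ)
    (hP : Pᴴ * P = 1) (hQ : Qᴴ * Q = 1) :
    S (P * M * Qᴴ) = S M := by
  have e : (P * M * Qᴴ)ᴴ * (P * M * Qᴴ) = Q * (Mᴴ * M) * Qᴴ := by
    simp only [conjTranspose_mul, conjTranspose_conjTranspose, Matrix.mul_assoc]
    rw [← Matrix.mul_assoc Pᴴ P, hP, Matrix.one_mul]
  have h : ((S (P * M * Qᴴ) : ℝ) : ℂ) = ((S M : ℝ) : ℂ) := by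
    rw [S_eq_trace, S_eq_trace, e, Matrix.trace_mul_cycle, hQ, Matrix.one_mul]
  exact_mod_cast h

lemma row_sum {n : ℕ} (U : Matrix (Fin n) (Fin n) ℂ) (hU : U * Uᴴ = 1) (k : Fin n) :
    ∑ l, Complex.normSq (U k l) = 1 := by
  have h := congrArg (fun M : Matrix (Fin n) (Fin n) ℂ => M k k) hU
  simp only [Matrix.mul_apply, Matrix.conjTranspose_apply, Matrix.one_apply_eq] at h
  have h2 : ((∑ l, Complex.normSq (U k l) : ℝ) : ℂ) = 1 := by
    push_cast
    rw [← h]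
    refine Finset.sum_congr rfl fun l _ => ?_
    rw [← Complex.mul_conj]; rfl
  exact_mod_cast h2

lemma key_ineq {n : ℕ} (σ : Fin n → ℝ) (hσ : ∀ k, 0 ≤ σ k)
    (U : Matrix (Fin n) (Fin n) ℂ) (hU : U * Uᴴ = 1) :
    S (Matrix.diagonal (fun k => (σ k : ℂ)) - 1) ≤
      S (Matrix.diagonal (fun k => (σ k : ℂ)) - U) := by
  unfold S
  refine Finset.sum_le_sum fun k _ => ?_
  have hrow := row_sum U hU k
  -- LHS
  have hL : ∑ l, Complex.normSq ((Matrix.diagonal (fun k => (σ k : ℂ)) - 1) k l)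
      = (σ k - 1) ^ 2 := by
    rw [Finset.sum_eq_single k]
    · simp [Matrix.diagonal_apply_eq, Matrix.one_apply_eq, Matrix.sub_apply]
      rw [show ((σ k : ℂ) - 1) = ((σ k - 1 : ℝ) : ℂ) by push_cast; ring]
      rw [Complex.normSq_ofReal]; ring
    · intro l _ hlk
      simp [Matrix.sub_apply, Matrix.diagonal_apply_ne' _ hlk, Matrix.one_apply_ne' hlk]
    · simp
  rw [hL]
  -- RHS split
  have hR : ∑ l, Complex.normSq ((Matrix.diagonal (fun k => (σ k : ℂ)) - U) k l)
      = Complex.normSq ((σ k : ℂ) - U k k)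
        + ∑ l ∈ Finset.univ.erase k, Complex.normSq (U k l) := by
    rw [← Finset.add_sum_erase _ _ (Finset.mem_univ k)]
    congr 1
    · simp [Matrix.sub_apply]
    · refine Finset.sum_congr rfl fun l hl => ?_
      have hlk : l ≠ k := Finset.ne_of_mem_erase hl
      simp [Matrix.sub_apply, Matrix.diagonal_apply_ne' _ hlk]
  rw [hR]
  have herase : ∑ l ∈ Finset.univ.erase k, Complex.normSq (U k l)
      = 1 - Complex.normSq (U k k) := by
    have := Finset.add_sum_erase Finset.univ (fun l => Complex.normSq (U k l))
      (Finset.mem_univ k)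
    rw [hrow] at this
    linarith
  rw [herase]
  set z := U k k with hz
  have hzle : Complex.normSq z ≤ 1 := by
    have : Complex.normSq z ≤ ∑ l, Complex.normSq (U k l) :=
      Finset.single_le_sum (f := fun l => Complex.normSq (U k l))
        (fun l _ => Complex.normSq_nonneg _) (Finset.mem_univ k)
    rw [hrow] at this; exact this
  have hns : Complex.normSq ((σ k : ℂ) - z) = (σ k - z.re) ^ 2 + z.im ^ 2 := by
    rw [Complex.normSq_apply]
    simp [Complex.sub_re, Complex.sub_im]
    ring
  rw [hns]
  rw [Complex.normSq_apply] at hzle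
  have hz2 : Complex.normSq z = z.re * z.re + z.im * z.im := Complex.normSq_apply z
  rw [hz2]
  have hre : z.re ≤ 1 := by nlinarith [sq_nonneg z.im]
  nlinarith [mul_nonneg (hσ k) (sub_nonneg.mpr hre)]

end ClosestUnitaryAux

open ClosestUnitaryAux in
/-- If `A = F * diagonal σ * Gᴴ` is an SVD, then `F * Gᴴ` is a closest unitary matrix
to `A` in Frobenius norm. -/
theorem closest_unitary {n : ℕ} (A F G : Matrix (Fin n) (Fin n) ℂ) (σ : Fin n → ℝ)
    (hF : F * Fᴴ = 1) (hG : G * Gᴴ = 1) (hσ0 : ∀ k, 0 ≤ σ k)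
    (hSVD : A = F * Matrix.diagonal (fun k => (σ k : ℂ)) * Gᴴ) :
    ∀ W : Matrix (Fin n) (Fin n) ℂ, W * Wᴴ = 1 →
      frobNorm (A - F * Gᴴ) ≤ frobNorm (A - W) := by
  intro W hW
  have hF' : Fᴴ * F = 1 := mul_eq_one_comm.mp hF
  have hG' : Gᴴ * G = 1 := mul_eq_one_comm.mp hG
  set D := Matrix.diagonal (fun k => (σ k : ℂ)) with hD
  set U := Fᴴ * W * G with hUdef
  have hU : U * Uᴴ = 1 := by
    simp only [hUdef, conjTranspose_mul, conjTranspose_conjTranspose]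
    have h1 : Fᴴ * W * G * (Gᴴ * (Wᴴ * F)) = Fᴴ * (W * (G * Gᴴ * (Wᴴ * F))) := by
      noncomm_ring
    rw [h1, hG, Matrix.one_mul, ← Matrix.mul_assoc W, hW, Matrix.one_mul, hF']
  have e1 : A - F * Gᴴ = F * (D - 1) * Gᴴ := by
    rw [hSVD]
    noncomm_ring
  have e2 : A - W = F * (D - U) * Gᴴ := by
    rw [hSVD, hUdef]
    have : F * (D - Fᴴ * W * G) * Gᴴ = F * D * Gᴴ - F * Fᴴ * (W * (G * Gᴴ)) := by
      noncomm_ring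
    rw [this, hF, hG, Matrix.one_mul, Matrix.mul_one]
  rw [e1, e2, frobNorm_eq, frobNorm_eq, S_conj F G _ hF' hG', S_conj F G _ hF' hG']
  exact Real.sqrt_le_sqrt (key_ineq σ hσ0 U hU)
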